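/- In a k-plex S and an independent set I ⊆ S containing a vertex x, every vertex of I \ {x} is a non-neighbor of x inside S; since x has at most k - 1 non-neighbors in S besides itself, |I| ≤ k. Consequently, for a growing k-plex C with candidate set P colored into independent sets I_1, ..., I_c, and u ∈ P, any k-plex S with C ∪ {u} ⊆ S ⊆ C ∪ P satisfies |S| ≤ Σ_{j: u ∉ I_j} min(|I_j ∩ N(u)|, k) + (k - |C \ N(u)|) + |C| + 1. -/
import Mathlib


open scoped Classical
open Finset

/-- A `k`-plex: every vertex of `S` has at least `|S| - k` neighbors inside `S`. -/
def IsKPlex {V : Type*} (G : SimpleGraph V) (k : ℕ) (S : Finset V) : Prop :=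
  ∀ v ∈ S, S.card ≤ (S.filter (fun w => G.Adj v w)).card + k

lemma indep_card_le {V : Type*} (G : SimpleGraph V) (k : ℕ) (S : Finset V)
    (hS : IsKPlex G k S) (I : Finset V) (hIS : I ⊆ S)
    (hind : ∀ x ∈ I, ∀ y ∈ I, ¬ G.Adj x y) (x : V) (hx : x ∈ I) :
    I.card ≤ k := by
  have hsub : I ⊆ S.filter (fun w => ¬ G.Adj x w) := by
    intro y hy
    simp only [mem_filter]
    exact ⟨hIS hy, hind x hx y hy⟩
  have h2 := Finset.card_filter_add_card_filter_not (s := S)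
    (p := fun w => G.Adj x w)
  have h1 := hS x (hIS hx)
  have h3 := Finset.card_le_card hsub
  omega

/-- In a `k`-plex `S`, an independent set `I ⊆ S` containing `x` consists (besides `x`)
of non-neighbors of `x`, hence `|I| ≤ k`.  Consequently, for a growing `k`-plex `C`
with candidate set `P` colored into independent sets, and `u ∈ P`, any `k`-plex `S`
with `C ∪ {u} ⊆ S ⊆ C ∪ P` satisfies the color-degree bound
`|S| ≤ Σ_{j : u ∉ I_j} min(|I_j ∩ N(u)|, k) + (k - |C \ N(u)|) + |C| + 1`. -/
theorem kplex_color_degree {V : Type*} (G : SimpleGraph V) (k : ℕ)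
    (C P : Finset V) (hCP : Disjoint C P)
    (Part : Finset (Finset V))
    (hpart : ∀ I ∈ Part, ∀ J ∈ Part, I ≠ J → Disjoint I J)
    (hcover : ∀ w ∈ P, ∃ I ∈ Part, w ∈ I)
    (hsub : ∀ I ∈ Part, I ⊆ P)
    (hind : ∀ I ∈ Part, ∀ x ∈ I, ∀ y ∈ I, ¬ G.Adj x y)
    (u : V) (hu : u ∈ P)
    (S : Finset V) (hS : IsKPlex G k S)
    (hCS : C ⊆ S) (huS : u ∈ S) (hSP : S ⊆ C ∪ P) :
    (∀ I ⊆ S, (∀ x ∈ I, ∀ y ∈ I, ¬ G.Adj x y) →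
      ∀ x ∈ I, (∀ y ∈ I, y ≠ x → ¬ G.Adj x y) ∧ I.card ≤ k) ∧
    S.card ≤ (∑ I ∈ Part.filter (fun I => u ∉ I),
        min ((I.filter (fun w => G.Adj u w)).card) k) +
      (k - (C.filter (fun x => ¬ G.Adj u x)).card) + C.card + 1 := by
  constructor
  · intro I hIS hI x hx
    exact ⟨fun y hy _ hadj => hI x hx y hy hadj,
      indep_card_le G k S hS I hIS hI x hx⟩
  · have huC : u ∉ C := fun h => Finset.disjoint_left.mp hCP h hu
    -- split S into neighbors and non-neighbors of u
    have hSAB := Finset.card_filter_add_card_filter_not (s := S)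
      (p := fun w => G.Adj u w)
    have hBk : (S.filter (fun w => ¬ G.Adj u w)).card ≤ k := by
      have := hS u huS; omega
    -- C-split
    have hCsplit := Finset.card_filter_add_card_filter_not (s := C)
      (p := fun w => G.Adj u w)
    have hCfilt : (C.filter (fun x => ¬ G.Adj u x)).card =
        (C.filter (fun w => ¬ G.Adj u w)).card := rfl
    -- the non-neighbor filter of C, plus u, sits in the non-neighbor filter of S
    have hc1 : (C.filter (fun w => ¬ G.Adj u w)).card + 1 ≤ k := by
      have hsub1 : insert u (C.filter (fun w => ¬ G.Adj u w)) ⊆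
          S.filter (fun w => ¬ G.Adj u w) := by
        intro y hy
        rcases Finset.mem_insert.mp hy with hy' | hy
        · rw [hy']; exact mem_filter.mpr ⟨huS, G.irrefl⟩
        · obtain ⟨h1, h2⟩ := mem_filter.mp hy
          exact mem_filter.mpr ⟨hCS h1, h2⟩
      have hcard := Finset.card_le_card hsub1
      rw [Finset.card_insert_of_notMem (fun h => huC (mem_filter.mp h).1)] at hcard
      omega
    -- bound on neighbors of u in S
    have hAsub : S.filter (fun w => G.Adj u w) ⊆
        (Part.filter (fun I => u ∉ I)).biUnion
          (fun I => (I.filter (fun w => G.Adj u w)) ∩ S) ∪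
        C.filter (fun w => G.Adj u w) := by
      intro w hw
      obtain ⟨hwS, hadj⟩ := mem_filter.mp hw
      rcases Finset.mem_union.mp (hSP hwS) with hwC | hwP
      · exact Finset.mem_union_right _ (mem_filter.mpr ⟨hwC, hadj⟩)
      · obtain ⟨I, hI, hwI⟩ := hcover w hwP
        have huI : u ∉ I := fun h => hind I hI u h w hwI hadj
        exact Finset.mem_union_left _ (Finset.mem_biUnion.mpr
          ⟨I, mem_filter.mpr ⟨hI, huI⟩,
            Finset.mem_inter.mpr ⟨mem_filter.mpr ⟨hwI, hadj⟩, hwS⟩⟩)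
    have hterm : ∀ I ∈ Part.filter (fun I => u ∉ I),
        ((I.filter (fun w => G.Adj u w)) ∩ S).card ≤
          min ((I.filter (fun w => G.Adj u w)).card) k := by
      intro I hI
      rcases (I.filter (fun w => G.Adj u w) ∩ S).eq_empty_or_nonempty with he | ⟨x, hx⟩
      · simp [he]
      · refine le_min (Finset.card_le_card Finset.inter_subset_left) ?_
        obtain ⟨h1, h2⟩ := Finset.mem_inter.mp hx
        have hxIS : x ∈ I ∩ S := Finset.mem_inter.mpr ⟨(mem_filter.mp h1).1, h2⟩
        have hkb : (I ∩ S).card ≤ k := by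
          refine indep_card_le G k S hS (I ∩ S) Finset.inter_subset_right ?_ x hxIS
          intro a ha b hb
          exact hind I (mem_filter.mp hI).1 a (Finset.mem_inter.mp ha).1 b
            (Finset.mem_inter.mp hb).1
        refine le_trans (Finset.card_le_card ?_) hkb
        intro y hy
        obtain ⟨hy1, hy2⟩ := Finset.mem_inter.mp hy
        exact Finset.mem_inter.mpr ⟨(mem_filter.mp hy1).1, hy2⟩
    have hAcard : (S.filter (fun w => G.Adj u w)).card ≤
        (∑ I ∈ Part.filter (fun I => u ∉ I),
          min ((I.filter (fun w => G.Adj u w)).card) k) +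
        (C.filter (fun w => G.Adj u w)).card := by
      calc (S.filter (fun w => G.Adj u w)).card
          ≤ ((Part.filter (fun I => u ∉ I)).biUnion
              (fun I => (I.filter (fun w => G.Adj u w)) ∩ S) ∪
            C.filter (fun w => G.Adj u w)).card := Finset.card_le_card hAsub
        _ ≤ ((Part.filter (fun I => u ∉ I)).biUnion
              (fun I => (I.filter (fun w => G.Adj u w)) ∩ S)).card +
            (C.filter (fun w => G.Adj u w)).card := Finset.card_union_le _ _
        _ ≤ (∑ I ∈ Part.filter (fun I => u ∉ I),
              ((I.filter (fun w => G.Adj u w)) ∩ S).card) +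
            (C.filter (fun w => G.Adj u w)).card := by
              exact Nat.add_le_add_right (Finset.card_biUnion_le) _
        _ ≤ _ := Nat.add_le_add_right (Finset.sum_le_sum hterm) _
    omega
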